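/- Let C be a Hermitian self-orthogonal [n,k] code over F_{q^2} with Hermitian dual distance d^{⊥_h}, and let C' be the Hermitian self-orthogonal [n+1, k+1] extension obtained by appending a zero column to the generator matrix and adding one row with nonzero last coordinate. Then the Hermitian dual distance of C' satisfies d^{⊥_h} ≤ d(C'^{⊥_h}) ≤ d^{⊥_h} + 1. -/

import Mathlib

/-- Hamming weight of a vector. -/
def hwt {F : Type*} [Field F] [DecidableEq F] {n : ℕ} (v : Fin n → F) : ℕ :=
  (Finset.univ.filter fun i => v i ≠ 0).card

/-- The minimum Hamming weight of a nonzero codeword of the Hermitian dual of `C`. -/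
noncomputable def hermDualDist {F : Type*} [Field F] [DecidableEq F] (q : ℕ) {n : ℕ}
    (C : Submodule F (Fin n → F)) : ℕ :=
  sInf {w | ∃ v : Fin n → F, v ≠ 0 ∧ (∀ u ∈ C, ∑ i, u i ^ q * v i = 0) ∧ hwt v = w}

lemma frob_add {F : Type*} [Field F] [Fintype F] (q : ℕ) (hq : Fintype.card F = q ^ 2)
    (a b : F) : (a + b) ^ q = a ^ q + b ^ q := by
  obtain ⟨n, hp, hcard⟩ := FiniteField.card F (ringChar F)
  have hdvd : q ∣ ringChar F ^ (n : ℕ) := ⟨q, by rw [← hcard, hq]; ring⟩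
  obtain ⟨m, -, rfl⟩ := (Nat.dvd_prime_pow hp).mp hdvd
  haveI := Fact.mk hp
  exact add_pow_char_pow a b (ringChar F) m

/-- The Hermitian dual distance of the `[n+1, k+1]` Hermitian self-orthogonal extension
`C'` of a Hermitian self-orthogonal `[n,k]` code `C` satisfies
`d^{⊥h}(C) ≤ d(C'^{⊥h}) ≤ d^{⊥h}(C) + 1`. -/
theorem stmt6 {F : Type*} [Field F] [Fintype F] [DecidableEq F] (q n k : ℕ)
    (hq : Fintype.card F = q ^ 2)
    (G : Matrix (Fin k) (Fin n) F) (hGli : LinearIndependent F fun i => G i)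
    (x : Fin n → F) (α : F) (hα : α ≠ 0)
    (hso : ∀ u ∈ Submodule.span F (Set.range fun i => G i),
      ∀ v ∈ Submodule.span F (Set.range fun i => G i), ∑ t, u t ^ q * v t = 0)
    (hso' : ∀ u ∈ Submodule.span F (Set.range
        (Fin.snoc (fun i : Fin k => Fin.snoc (G i) (0 : F)) (Fin.snoc x α) :
          Fin (k + 1) → Fin (n + 1) → F)),
      ∀ v ∈ Submodule.span F (Set.range
        (Fin.snoc (fun i : Fin k => Fin.snoc (G i) (0 : F)) (Fin.snoc x α) :
          Fin (k + 1) → Fin (n + 1) → F)),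
        ∑ t, u t ^ q * v t = 0) :
    hermDualDist q (Submodule.span F (Set.range fun i => G i))
        ≤ hermDualDist q (Submodule.span F (Set.range
            (Fin.snoc (fun i : Fin k => Fin.snoc (G i) (0 : F)) (Fin.snoc x α) :
              Fin (k + 1) → Fin (n + 1) → F)))
    ∧ hermDualDist q (Submodule.span F (Set.range
          (Fin.snoc (fun i : Fin k => Fin.snoc (G i) (0 : F)) (Fin.snoc x α) :
            Fin (k + 1) → Fin (n + 1) → F)))
        ≤ hermDualDist q (Submodule.span F (Set.range fun i => G i)) + 1 := by
  classical
  set gen : Fin (k + 1) → Fin (n + 1) → F :=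
    (Fin.snoc (fun i : Fin k => Fin.snoc (G i) (0 : F)) (Fin.snoc x α)) with hgendef
  set C : Submodule F (Fin n → F) := Submodule.span F (Set.range fun i => G i) with hCdef
  set C' : Submodule F (Fin (n + 1) → F) := Submodule.span F (Set.range gen) with hC'def
  set S : Set ℕ :=
    {w | ∃ v : Fin n → F, v ≠ 0 ∧ (∀ u ∈ C, ∑ i, u i ^ q * v i = 0) ∧ hwt v = w} with hSdef
  set S' : Set ℕ :=
    {w | ∃ v : Fin (n + 1) → F, v ≠ 0 ∧ (∀ u ∈ C', ∑ i, u i ^ q * v i = 0) ∧ hwt v = w}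
    with hS'def
  have hcard2 : 1 < Fintype.card F := Fintype.one_lt_card
  have hq0 : q ≠ 0 := by rintro rfl; rw [hq] at hcard2; omega
  have hαq : α ^ q ≠ 0 := pow_ne_zero _ hα
  have hgenlast : gen (Fin.last k) = Fin.snoc x α := by
    rw [hgendef]; exact Fin.snoc_last _ _
  have hgencast : ∀ j : Fin k, gen (Fin.castSucc j) = Fin.snoc (G j) (0 : F) := by
    intro j; rw [hgendef]; exact Fin.snoc_castSucc _ _ _
  have hxα_mem : (Fin.snoc x α : Fin (n + 1) → F) ∈ C' :=
    hgenlast ▸ Submodule.subset_span ⟨Fin.last k, rfl⟩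
  -- the linear "append a zero" map
  let L : (Fin n → F) →ₗ[F] (Fin (n + 1) → F) :=
    { toFun := fun u => Fin.snoc u 0
      map_add' := by
        intro u v; funext t
        refine Fin.lastCases ?_ ?_ t
        · simp
        · intro j; simp
      map_smul' := by
        intro a u; funext t
        refine Fin.lastCases ?_ ?_ t
        · simp
        · intro j; simp }
  have hsnoc_mem : ∀ u ∈ C, (Fin.snoc u (0 : F) : Fin (n + 1) → F) ∈ C' := by
    intro u hu
    have hle : C ≤ Submodule.comap L C' := by
      rw [hCdef, Submodule.span_le]
      rintro _ ⟨j, rfl⟩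
      show (Fin.snoc (G j) (0 : F) : Fin (n + 1) → F) ∈ C'
      exact (hgencast j) ▸ Submodule.subset_span ⟨Fin.castSucc j, rfl⟩
    exact hle hu
  -- sum expansion for snoc vectors
  have hsum : ∀ (u : Fin n → F) (c : F) (w : Fin (n + 1) → F),
      ∑ t, (Fin.snoc u c : Fin (n + 1) → F) t ^ q * w t
        = (∑ i, u i ^ q * w (Fin.castSucc i)) + c ^ q * w (Fin.last n) := by
    intro u c w
    rw [Fin.sum_univ_castSucc]
    simp
  -- puncturing construction
  have punct : ∀ v' : Fin (n + 1) → F, v' ≠ 0 →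
      (∀ u ∈ C', ∑ t, u t ^ q * v' t = 0) →
      ∃ v : Fin n → F, v ≠ 0 ∧ (∀ u ∈ C, ∑ i, u i ^ q * v i = 0) ∧ hwt v ≤ hwt v' := by
    intro v' hv'ne hv'dual
    refine ⟨fun i => v' (Fin.castSucc i), ?_, ?_, ?_⟩
    · intro hv0
      have h := hv'dual _ hxα_mem
      rw [hsum] at h
      have hz : ∀ i, v' (Fin.castSucc i) = 0 := fun i => congrFun hv0 i
      simp only [hz, mul_zero, Finset.sum_const_zero, zero_add] at h
      have hlast : v' (Fin.last n) = 0 := by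
        rcases mul_eq_zero.mp h with h1 | h1
        · exact absurd h1 hαq
        · exact h1
      apply hv'ne
      funext t
      refine Fin.lastCases ?_ ?_ t
      · exact hlast
      · exact hz
    · intro u hu
      have h := hv'dual _ (hsnoc_mem u hu)
      rw [hsum] at h
      simpa [zero_pow hq0] using h
    · apply Finset.card_le_card_of_injOn Fin.castSucc
      · intro i hi
        simp only [Finset.mem_coe, Finset.mem_filter, Finset.mem_univ, true_and] at hi ⊢
        exact hi
      · exact fun a _ b _ h => Fin.castSucc_injective _ h
  -- S' is nonempty (witness: the new generator row itself)
  have hxαne : (Fin.snoc x α : Fin (n + 1) → F) ≠ 0 := by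
    intro h
    apply hα
    have := congrFun h (Fin.last n)
    simpa using this
  have hS'ne : S'.Nonempty :=
    ⟨_, ⟨Fin.snoc x α, hxαne, fun u hu => hso' u hu _ hxα_mem, rfl⟩⟩
  obtain ⟨v', hv'ne, hv'dual, hv'wt⟩ := Nat.sInf_mem hS'ne
  obtain ⟨v, hvne, hvdual, hvwt⟩ := punct v' hv'ne hv'dual
  have hlower : sInf S ≤ sInf S' := by
    calc sInf S ≤ hwt v := Nat.sInf_le ⟨v, hvne, hvdual, rfl⟩
      _ ≤ hwt v' := hvwt
      _ = sInf S' := hv'wt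
  have hSne : S.Nonempty := ⟨_, ⟨v, hvne, hvdual, rfl⟩⟩
  obtain ⟨w, hwne, hwdual, hwwt⟩ := Nat.sInf_mem hSne
  set β : F := -(∑ i, x i ^ q * w i) / α ^ q with hβdef
  set w' : Fin (n + 1) → F := Fin.snoc w β with hw'def
  have hw'cast : ∀ i : Fin n, w' (Fin.castSucc i) = w i := by
    intro i; rw [hw'def]; exact Fin.snoc_castSucc _ _ _
  have hw'last : w' (Fin.last n) = β := by rw [hw'def]; exact Fin.snoc_last _ _
  have hw'ne : w' ≠ 0 := by
    obtain ⟨i, hi⟩ : ∃ i, w i ≠ 0 := by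
      by_contra h; push_neg at h; exact hwne (funext h)
    intro h0
    apply hi
    have := congrFun h0 (Fin.castSucc i)
    rwa [hw'cast] at this
  have hw'dual : ∀ u ∈ C', ∑ t, u t ^ q * w' t = 0 := by
    intro u hu
    rw [hC'def] at hu
    refine Submodule.span_induction ?_ ?_ ?_ ?_ hu
    · rintro _ ⟨j, rfl⟩
      refine Fin.lastCases ?_ ?_ j
      · rw [hgenlast, hsum]
        simp only [hw'cast, hw'last, hβdef]
        field_simp
        ring
      · intro j
        rw [hgencast, hsum]
        simp only [hw'cast, zero_pow hq0, zero_mul, add_zero]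
        exact hwdual (G j) (Submodule.subset_span ⟨j, rfl⟩)
    · simp [zero_pow hq0]
    · intro a b _ _ ha hb
      have hab : ∀ t, (a + b) t ^ q = a t ^ q + b t ^ q := fun t => frob_add q hq _ _
      calc ∑ t, (a + b) t ^ q * w' t = ∑ t, (a t ^ q * w' t + b t ^ q * w' t) := by
            refine Finset.sum_congr rfl fun t _ => ?_
            rw [hab t, add_mul]
        _ = 0 := by rw [Finset.sum_add_distrib, ha, hb, add_zero]
    · intro a u _ hu'
      have hsm : ∀ t, (a • u) t ^ q = a ^ q * u t ^ q := fun t => by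
        simp [mul_pow]
      calc ∑ t, (a • u) t ^ q * w' t = a ^ q * ∑ t, u t ^ q * w' t := by
            rw [Finset.mul_sum]
            exact Finset.sum_congr rfl fun t _ => by rw [hsm t, mul_assoc]
        _ = 0 := by rw [hu', mul_zero]
  have hw'wt : hwt w' ≤ hwt w + 1 := by
    have hsub : (Finset.univ.filter fun t => w' t ≠ 0) ⊆
        insert (Fin.last n) ((Finset.univ.filter fun i => w i ≠ 0).image Fin.castSucc) := by
      intro t
      refine Fin.lastCases ?_ ?_ t
      · intro _; exact Finset.mem_insert_self _ _
      · intro j hj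
        simp only [Finset.mem_filter, Finset.mem_univ, true_and] at hj
        refine Finset.mem_insert_of_mem (Finset.mem_image.mpr ⟨j, ?_, rfl⟩)
        simp only [Finset.mem_filter, Finset.mem_univ, true_and]
        rwa [hw'cast] at hj
    have h1 := Finset.card_le_card hsub
    have h2 := Finset.card_insert_le (Fin.last n)
      ((Finset.univ.filter fun i => w i ≠ 0).image Fin.castSucc)
    have h3 := Finset.card_image_le (f := Fin.castSucc)
      (s := Finset.univ.filter fun i => w i ≠ 0)
    simp only [hwt]
    omega
  have hupper : sInf S' ≤ sInf S + 1 := by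
    have hm : hwt w' ∈ S' := ⟨w', hw'ne, hw'dual, rfl⟩
    have := Nat.sInf_le hm
    omega
  exact ⟨hlower, hupper⟩
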